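/- Let m ∈ ℤ∖{0} and let h : ℝ → ℂ be continuous, not identically zero, and satisfy |h(t)| ≤ C·(1+|t|)^{−2} for some constant C > 0 and all t ∈ ℝ. Then the 2|m| functions θ₁(h), θ₂(h), …, θ_{2|m|}(h) : ℝ³ → ℂ are linearly independent over ℂ. -/

import Mathlib

noncomputable section

open MeasureTheory Complex

/-- `e(x) = exp(2πix)`. -/
def e (x : ℝ) : ℂ := Complex.exp (2 * Real.pi * Complex.I * x)

/-- The theta transform
`θ_α(h)(x,y,z) = Σ_{k∈ℤ} e(m·y + (2km+α)·z)·h(x + k + α/(2m))`,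
as a function on `ℝ³`. -/
def thetaFun (m α : ℤ) (h : ℝ → ℂ) : ℝ × ℝ × ℝ → ℂ :=
  fun p => ∑' k : ℤ, e ((m : ℝ) * p.2.1 + ((2 * k * m + α : ℤ) : ℝ) * p.2.2) *
    h (p.1 + (k : ℝ) + (α : ℝ) / (2 * (m : ℝ)))

lemma continuous_e : Continuous e := by
  unfold e; fun_prop

lemma e_norm (x : ℝ) : ‖e x‖ = 1 := by
  unfold e
  rw [Complex.norm_exp]
  simp [mul_comm, mul_assoc]

lemma e_add (x y : ℝ) : e (x + y) = e x * e y := by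
  unfold e
  rw [← Complex.exp_add]
  congr 1
  push_cast
  ring

lemma integral_e (n : ℤ) : (∫ z in (0:ℝ)..1, e ((n:ℝ) * z)) = if n = 0 then 1 else 0 := by
  have key : ∀ z : ℝ, e ((n:ℝ) * z) = Complex.exp ((2 * Real.pi * Complex.I * n) * z) := by
    intro z; unfold e; push_cast; ring_nf
  split_ifs with hn
  · simp [hn, e, Complex.exp_zero]
  · have hc : (2 * Real.pi * Complex.I * n : ℂ) ≠ 0 := by
      simp [Real.pi_ne_zero, Complex.I_ne_zero, hn]
    rw [intervalIntegral.integral_congr (fun z _ => key z)]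
    rw [integral_exp_mul_complex hc]
    have h1 : Complex.exp (2 * Real.pi * Complex.I * n * (1:ℝ)) = 1 := by
      push_cast
      rw [mul_one]
      have := Complex.exp_int_mul_two_pi_mul_I n
      rw [← this]; ring_nf
    rw [h1]
    push_cast
    rw [mul_zero, Complex.exp_zero, sub_self, zero_div]

lemma summable_base : Summable fun k : ℤ => 1 / (1 + |(k:ℝ)|) ^ 2 := by
  rw [summable_int_iff_summable_nat_and_neg]
  constructor <;>
  · have := (Real.summable_one_div_nat_add_rpow 1 2).mpr one_lt_two
    apply this.congr
    intro n
    have h2 : |(n:ℝ) + 1| = (n:ℝ) + 1 := abs_of_nonneg (by positivity)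
    rw [h2, show (2:ℝ) = ((2:ℕ):ℝ) by norm_num, Real.rpow_natCast]
    simp only [Int.cast_neg, Int.cast_natCast, abs_neg, Nat.abs_cast]
    ring

lemma summable_aux (C y : ℝ) (hC : 0 ≤ C) :
    Summable fun k : ℤ => C / (1 + |y + (k:ℝ)|) ^ 2 := by
  have base := (summable_base.mul_left (C * (1 + |y|) ^ 2))
  apply Summable.of_nonneg_of_le (fun k => by positivity) _ base
  intro k
  have key : 1 + |(k:ℝ)| ≤ (1 + |y|) * (1 + |y + (k:ℝ)|) := by
    have h4 := abs_add_le (y + (k:ℝ)) (-y)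
    have e1 : y + (k:ℝ) + -y = (k:ℝ) := by ring
    rw [e1, abs_neg] at h4
    nlinarith [abs_nonneg y, abs_nonneg (y + (k:ℝ))]
  have key2 : (1 + |(k:ℝ)|) ^ 2 ≤ (1 + |y|) ^ 2 * (1 + |y + (k:ℝ)|) ^ 2 := by
    rw [← mul_pow]
    exact pow_le_pow_left₀ (by positivity) key 2
  calc C / (1 + |y + (k:ℝ)|) ^ 2 ≤ C * (1 + |y|) ^ 2 / (1 + |(k:ℝ)|) ^ 2 := by
        rw [div_le_div_iff₀ (by positivity) (by positivity)]
        nlinarith [mul_le_mul_of_nonneg_left key2 hC]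
    _ = C * (1 + |y|) ^ 2 * (1 / (1 + |(k:ℝ)|) ^ 2) := (mul_one_div _ _).symm


lemma summable_h (h : ℝ → ℂ) (C : ℝ) (hC : 0 < C)
    (hd : ∀ t, ‖h t‖ ≤ C / (1 + |t|) ^ 2) (x c : ℝ) :
    Summable fun k : ℤ => ‖h (x + (k:ℝ) + c)‖ := by
  apply Summable.of_nonneg_of_le (fun k => norm_nonneg _) _ (summable_aux C (x + c) hC.le)
  intro k
  have e1 : x + (k:ℝ) + c = (x + c) + (k:ℝ) := by ring
  rw [e1]; exact hd _

lemma theta_integral (m : ℤ) (h : ℝ → ℂ) (hcont : Continuous h)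
    (C : ℝ) (hC : 0 < C) (hd : ∀ t, ‖h t‖ ≤ C / (1 + |t|) ^ 2) (β α : ℤ) (x : ℝ) :
    (∫ z in (0:ℝ)..1, thetaFun m β h (x, 0, z) * e (-(α:ℝ) * z))
      = ∑' k : ℤ, (if 2 * k * m + β = α then h (x + (k:ℝ) + (β:ℝ) / (2 * (m:ℝ))) else 0) := by
  set c : ℝ := (β:ℝ) / (2 * (m:ℝ)) with hc
  have hsum : Summable fun k : ℤ => ‖h (x + (k:ℝ) + c)‖ := summable_h h C hC hd x c
  set F : ℤ → ℝ → ℂ := fun k z => e (((2*k*m + β - α : ℤ) : ℝ) * z) * h (x + (k:ℝ) + c) with hF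
  have hint : ∀ z : ℝ, thetaFun m β h (x, 0, z) * e (-(α:ℝ) * z) = ∑' k : ℤ, F k z := by
    intro z
    simp only [thetaFun]
    rw [← tsum_mul_right]
    congr 1; funext k
    have e2 : (e ((m:ℝ)*0 + ((2*k*m+β:ℤ):ℝ)*z) * h (x + (k:ℝ) + c)) * e (-(α:ℝ)*z)
        = (e ((m:ℝ)*0 + ((2*k*m+β:ℤ):ℝ)*z) * e (-(α:ℝ)*z)) * h (x + (k:ℝ) + c) := by ring
    rw [e2, hF, ← e_add]
    congr 2
    push_cast
    ring
  have hcF : ∀ k : ℤ, Continuous (F k) := fun k =>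
    (continuous_e.comp (continuous_const.mul continuous_id)).mul continuous_const
  have hInt : ∀ k : ℤ, Integrable (F k) (volume.restrict (Set.Ioc (0:ℝ) 1)) := fun k =>
    (hcF k).integrableOn_Ioc
  have hval : ∀ k : ℤ, (∫ z in Set.Ioc (0:ℝ) 1, ‖F k z‖) = ‖h (x + (k:ℝ) + c)‖ := by
    intro k
    have : (fun z => ‖F k z‖) = fun _ : ℝ => ‖h (x + (k:ℝ) + c)‖ :=
      funext fun z => by rw [hF, norm_mul, e_norm, one_mul]
    rw [this, setIntegral_const]
    simp [Real.volume_Ioc]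
  have hNorm : Summable fun k : ℤ => ∫ z in Set.Ioc (0:ℝ) 1, ‖F k z‖ :=
    hsum.congr fun k => (hval k).symm
  rw [intervalIntegral.integral_congr (fun z _ => hint z),
      intervalIntegral.integral_of_le zero_le_one,
      ← MeasureTheory.integral_tsum_of_summable_integral_norm hInt hNorm]
  apply tsum_congr
  intro k
  rw [← intervalIntegral.integral_of_le zero_le_one]
  have : (∫ z in (0:ℝ)..1, F k z)
      = (∫ z in (0:ℝ)..1, e (((2*k*m + β - α : ℤ) : ℝ) * z)) * h (x + (k:ℝ) + c) := by
    rw [← intervalIntegral.integral_mul_const]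
  rw [this, integral_e]
  split_ifs with h1 h2 h2
  · rw [one_mul]
  · omega
  · omega
  · rw [zero_mul]


lemma key_k (m α β k : ℤ) (hm : m ≠ 0) (h1 : 1 ≤ α) (h2 : α ≤ 2*|m|)
    (h3 : 1 ≤ β) (h4 : β ≤ 2*|m|) (he : 2*k*m + β = α) : k = 0 ∧ β = α := by
  have hM : 1 ≤ |m| := Int.one_le_abs hm
  have hk : k = 0 := by
    by_contra hk
    have hk1 : 1 ≤ |k| := Int.one_le_abs hk
    have habs : |2*k*m| = 2 * (|k| * |m|) := by
      rw [abs_mul, abs_mul]; norm_num; ring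
    have h5 : |α - β| = 2 * (|k| * |m|) := by rw [show α - β = 2*k*m by omega] at *; omega
    have h6 : |α - β| ≤ 2*|m| - 1 := abs_le.mpr ⟨by omega, by omega⟩
    nlinarith
  subst hk
  simp at he
  exact ⟨rfl, he⟩

theorem statement18 (m : ℤ) (hm : m ≠ 0) (h : ℝ → ℂ)
    (hcont : Continuous h) (hne : h ≠ 0)
    (hdecay : ∃ C : ℝ, 0 < C ∧ ∀ t : ℝ, ‖h t‖ ≤ C / (1 + |t|) ^ 2) :
    LinearIndependent ℂ
      (fun a : Fin (2 * m.natAbs) => thetaFun m ((a : ℕ) + 1 : ℤ) h) := by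
  obtain ⟨C, hC, hd⟩ := hdecay
  rw [Fintype.linearIndependent_iff]
  intro g hg i
  obtain ⟨x₀, hx₀⟩ := Function.ne_iff.mp hne
  simp only [Pi.zero_apply] at hx₀
  set α : ℤ := ((i : ℕ) : ℤ) + 1 with hα
  set x : ℝ := x₀ - (α : ℝ) / (2 * (m : ℝ)) with hx
  have hb : ∀ j : Fin (2 * m.natAbs), 1 ≤ ((j:ℕ):ℤ) + 1 ∧ ((j:ℕ):ℤ) + 1 ≤ 2 * |m| := by
    intro j
    have hj := j.2
    refine ⟨by omega, ?_⟩
    rw [Int.abs_eq_natAbs]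
    exact_mod_cast Nat.succ_le_of_lt hj
  have hval : ∀ j : Fin (2 * m.natAbs),
      (∫ z in (0:ℝ)..1, thetaFun m (((j:ℕ):ℤ) + 1) h (x, 0, z) * e (-(α:ℝ) * z))
        = if j = i then h x₀ else 0 := by
    intro j
    rw [theta_integral m h hcont C hC hd _ α x]
    by_cases hji : j = i
    · subst hji
      rw [if_pos rfl]
      rw [tsum_eq_single 0 ?side]
      case side =>
        intro k hk
        rw [if_neg]
        intro hcon
        exact hk (key_k m α _ k hm (hb j).1 (hb j).2 (hb j).1 (hb j).2 hcon).1
      rw [if_pos (by ring)]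
      congr 1
      rw [hx, hα]
      push_cast
      ring
    · rw [if_neg hji]
      have hz : ∀ k : ℤ, (if 2*k*m + (((j:ℕ):ℤ)+1) = α
          then h (x + (k:ℝ) + ((((j:ℕ):ℤ)+1 : ℤ):ℝ) / (2 * (m:ℝ))) else 0) = 0 := by
        intro k
        rw [if_neg]
        intro hcon
        have hba := (key_k m α _ k hm (hb i).1 (hb i).2 (hb j).1 (hb j).2 hcon).2
        exact hji (Fin.ext (by omega))
      rw [tsum_congr hz, tsum_zero]
  have hcontθ : ∀ β : ℤ, Continuous fun z : ℝ => thetaFun m β h (x, 0, z) := by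
    intro β
    have hrfl : (fun z : ℝ => thetaFun m β h (x, 0, z))
        = fun z => ∑' k : ℤ, e ((m:ℝ) * 0 + ((2*k*m + β : ℤ):ℝ) * z) *
            h (x + (k:ℝ) + (β:ℝ) / (2 * (m:ℝ))) := rfl
    rw [hrfl]
    apply continuous_tsum (u := fun k : ℤ => ‖h (x + (k:ℝ) + (β:ℝ) / (2 * (m:ℝ)))‖)
    · intro k
      exact (continuous_e.comp (by fun_prop)).mul continuous_const
    · exact summable_h h C hC hd x _
    · intro k z
      rw [norm_mul, e_norm, one_mul]
  have hii : ∀ j : Fin (2 * m.natAbs), IntervalIntegrable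
      (fun z => g j * (thetaFun m (((j:ℕ):ℤ)+1) h (x, 0, z) * e (-(α:ℝ) * z)))
      MeasureTheory.volume 0 1 := by
    intro j
    apply Continuous.intervalIntegrable
    exact continuous_const.mul ((hcontθ _).mul (continuous_e.comp (by fun_prop)))
  have hzero : (∫ z in (0:ℝ)..1, ∑ j : Fin (2 * m.natAbs),
      g j * (thetaFun m (((j:ℕ):ℤ)+1) h (x, 0, z) * e (-(α:ℝ) * z))) = 0 := by
    have hz : ∀ z : ℝ, ∑ j : Fin (2 * m.natAbs),
        g j * (thetaFun m (((j:ℕ):ℤ)+1) h (x, 0, z) * e (-(α:ℝ) * z)) = 0 := by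
      intro z
      have h0 := congrFun hg (x, 0, z)
      simp only [Finset.sum_apply, Pi.smul_apply, smul_eq_mul, Pi.zero_apply] at h0
      calc ∑ j : Fin (2 * m.natAbs),
            g j * (thetaFun m (((j:ℕ):ℤ)+1) h (x, 0, z) * e (-(α:ℝ) * z))
          = (∑ j : Fin (2 * m.natAbs), g j * thetaFun m (((j:ℕ):ℤ)+1) h (x, 0, z))
              * e (-(α:ℝ) * z) := by
            rw [Finset.sum_mul]
            exact Finset.sum_congr rfl fun j _ => (mul_assoc _ _ _).symm
        _ = 0 := by rw [h0, zero_mul]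
    rw [intervalIntegral.integral_congr (fun z _ => hz z)]
    simp
  have hfin : (∫ z in (0:ℝ)..1, ∑ j : Fin (2 * m.natAbs),
      g j * (thetaFun m (((j:ℕ):ℤ)+1) h (x, 0, z) * e (-(α:ℝ) * z)))
      = ∑ j : Fin (2 * m.natAbs), g j *
        (∫ z in (0:ℝ)..1, thetaFun m (((j:ℕ):ℤ)+1) h (x, 0, z) * e (-(α:ℝ) * z)) := by
    rw [intervalIntegral.integral_finset_sum (fun j _ => hii j)]
    exact Finset.sum_congr rfl fun j _ => intervalIntegral.integral_const_mul _ _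
  have h2 := hfin
  simp only [hval] at h2
  rw [hzero] at h2
  have h3 : g i * h x₀ = 0 := by
    rw [eq_comm] at h2
    simpa only [mul_ite, mul_zero, Finset.sum_ite_eq', Finset.mem_univ, if_true] using h2
  exact (mul_eq_zero.mp h3).resolve_right hx₀

end
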